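/- Let (σ_ℓ)_{ℓ≥1} be a GPAS variance sequence with gate parameters (α_ℓ) and scaling factors β_ℓ = 1 − SiLU(α_ℓ) > 0, let A ≥ 0, B ≥ 0, and define S_ℓ := ∑_{k=1}^{ℓ−1} ( 1/(σ_k + 1) + log β_k ). Then for every natural number L ≥ 1, the layerwise gradient-norm product satisfies ∏_{ℓ=1}^{L−1} ( 1 + A/σ_ℓ + B/σ_ℓ² ) ≤ exp( ∑_{ℓ=1}^{L−1} [ (A/σ_1)·exp(−S_ℓ/2) + (B/σ_1²)·exp(−S_ℓ) ] ). -/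

import Mathlib

/-- The Sigmoid Linear Unit: `SiLU x = x / (1 + exp (−x))`. -/
noncomputable def SiLU (x : ℝ) : ℝ := x / (1 + Real.exp (-x))

/-- For a GPAS variance sequence `σ` (here `σ 0 = σ_1`, indices shifted by
one so the product/sum over `ℓ = 1, …, L−1` becomes a product/sum over `Finset.range (L−1)`),
with `S_ℓ = ∑_{k=1}^{ℓ−1} (1/(σ_k + 1) + log β_k)`, the layerwise gradient-norm product
satisfies `∏_{ℓ=1}^{L−1} (1 + A/σ_ℓ + B/σ_ℓ²) ≤
exp(∑_{ℓ=1}^{L−1} ((A/σ_1) e^{−S_ℓ/2} + (B/σ_1²) e^{−S_ℓ}))`. -/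
theorem gpas_gradient_norm_product_bound
    (σ α : ℕ → ℝ)
    (hσ : ∀ ℓ, 0 < σ ℓ)
    (hβ : ∀ ℓ, 0 < 1 - SiLU (α ℓ))
    (hrec : ∀ ℓ, (σ (ℓ + 1)) ^ 2 = (σ ℓ) ^ 2 * (1 + 1 / σ ℓ) * (1 - SiLU (α ℓ)))
    (A B : ℝ) (hA : 0 ≤ A) (hB : 0 ≤ B)
    (S : ℕ → ℝ)
    (hS : ∀ ℓ, S ℓ = ∑ k ∈ Finset.range ℓ,
      (1 / (σ k + 1) + Real.log (1 - SiLU (α k))))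
    (L : ℕ) (hL : 1 ≤ L) :
    ∏ ℓ ∈ Finset.range (L - 1), (1 + A / σ ℓ + B / (σ ℓ) ^ 2) ≤
      Real.exp (∑ ℓ ∈ Finset.range (L - 1),
        ((A / σ 0) * Real.exp (-(S ℓ) / 2) + (B / (σ 0) ^ 2) * Real.exp (-(S ℓ)))) := by
  have hσ0 := hσ 0
  -- Step 1: variance lower bound, squared form
  have hsq : ∀ ℓ, σ 0 ^ 2 * Real.exp (S ℓ) ≤ σ ℓ ^ 2 := by
    intro ℓ
    induction ℓ with
    | zero => simp [hS 0]
    | succ n ih =>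
      have hSn : S (n + 1) = S n + (1 / (σ n + 1) + Real.log (1 - SiLU (α n))) := by
        rw [hS, hS, Finset.sum_range_succ]
      have hσn := hσ n
      have hpos : (0:ℝ) < 1 + 1 / σ n := by positivity
      have hlog : 1 / (σ n + 1) ≤ Real.log (1 + 1 / σ n) := by
        have h := Real.one_sub_inv_le_log_of_pos hpos
        have heq : 1 - (1 + 1 / σ n)⁻¹ = 1 / (σ n + 1) := by
          field_simp
          ring
        linarith [heq ▸ h]
      have hβn := hβ n
      have key : Real.exp (1 / (σ n + 1) + Real.log (1 - SiLU (α n))) ≤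
          (1 + 1 / σ n) * (1 - SiLU (α n)) := by
        rw [Real.exp_add, Real.exp_log hβn]
        refine mul_le_mul_of_nonneg_right ?_ hβn.le
        calc Real.exp (1 / (σ n + 1)) ≤ Real.exp (Real.log (1 + 1 / σ n)) :=
              Real.exp_le_exp.2 hlog
          _ = 1 + 1 / σ n := Real.exp_log hpos
      calc σ 0 ^ 2 * Real.exp (S (n + 1))
          = (σ 0 ^ 2 * Real.exp (S n)) *
              Real.exp (1 / (σ n + 1) + Real.log (1 - SiLU (α n))) := by
            rw [hSn, Real.exp_add]; ring
        _ ≤ σ n ^ 2 * ((1 + 1 / σ n) * (1 - SiLU (α n))) :=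
            mul_le_mul ih key (Real.exp_pos _).le (by positivity)
        _ = σ (n + 1) ^ 2 := by rw [hrec n]; ring
  -- Step 2: linear form
  have hlin : ∀ ℓ, σ 0 * Real.exp (S ℓ / 2) ≤ σ ℓ := by
    intro ℓ
    have h2 : (σ 0 * Real.exp (S ℓ / 2)) ^ 2 ≤ σ ℓ ^ 2 := by
      have heq : (σ 0 * Real.exp (S ℓ / 2)) ^ 2 = σ 0 ^ 2 * Real.exp (S ℓ) := by
        rw [mul_pow, sq (Real.exp _), ← Real.exp_add]
        norm_num
      rw [heq]; exact hsq ℓ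
    nlinarith [hσ ℓ, mul_pos hσ0 (Real.exp_pos (S ℓ / 2))]
  -- Step 3: termwise bound
  have hterm : ∀ ℓ, 1 + A / σ ℓ + B / (σ ℓ) ^ 2 ≤
      Real.exp ((A / σ 0) * Real.exp (-(S ℓ) / 2) + (B / (σ 0) ^ 2) * Real.exp (-(S ℓ))) := by
    intro ℓ
    have hσℓ := hσ ℓ
    have eℓ := Real.exp_pos (S ℓ / 2)
    have eℓ' := Real.exp_pos (S ℓ)
    have h1 : A / σ ℓ ≤ (A / σ 0) * Real.exp (-(S ℓ) / 2) := by
      have hle : A / σ ℓ ≤ A / (σ 0 * Real.exp (S ℓ / 2)) :=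
        div_le_div_of_nonneg_left hA (by positivity) (hlin ℓ)
      have heq : A / (σ 0 * Real.exp (S ℓ / 2)) = (A / σ 0) * Real.exp (-(S ℓ) / 2) := by
        rw [neg_div, Real.exp_neg]
        field_simp
      linarith [heq ▸ hle]
    have h2 : B / (σ ℓ) ^ 2 ≤ (B / (σ 0) ^ 2) * Real.exp (-(S ℓ)) := by
      have hle : B / (σ ℓ) ^ 2 ≤ B / (σ 0 ^ 2 * Real.exp (S ℓ)) :=
        div_le_div_of_nonneg_left hB (by positivity) (hsq ℓ)
      have heq : B / (σ 0 ^ 2 * Real.exp (S ℓ)) = (B / (σ 0) ^ 2) * Real.exp (-(S ℓ)) := by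
        rw [Real.exp_neg]
        field_simp
      linarith [heq ▸ hle]
    have := Real.add_one_le_exp
      ((A / σ 0) * Real.exp (-(S ℓ) / 2) + (B / (σ 0) ^ 2) * Real.exp (-(S ℓ)))
    linarith
  -- Step 4: product bound
  calc ∏ ℓ ∈ Finset.range (L - 1), (1 + A / σ ℓ + B / (σ ℓ) ^ 2)
      ≤ ∏ ℓ ∈ Finset.range (L - 1),
          Real.exp ((A / σ 0) * Real.exp (-(S ℓ) / 2) + (B / (σ 0) ^ 2) * Real.exp (-(S ℓ))) := by
        refine Finset.prod_le_prod (fun i _ => ?_) (fun i _ => hterm i)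
        have := hσ i; positivity
    _ = Real.exp (∑ ℓ ∈ Finset.range (L - 1),
          ((A / σ 0) * Real.exp (-(S ℓ) / 2) + (B / (σ 0) ^ 2) * Real.exp (-(S ℓ)))) :=
        (Real.exp_sum _ _).symm
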